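/- Let A ∈ ℝ²ˣ² be of the form A = [[-a₁₂, a₁₂],[a₂₁, -a₂₁]] with a₁₂, a₂₁ ≥ 0 (a 2×2 Metzler matrix with zero row sums), and let P = I - (1/2)·1₂1₂'. Then PA + A'P = 2·tr(A)·P. Hence for x: ℝ → ℝ² solving ẋ = Ax, the function V(x) = x'Px satisfies dV/dt = 2·tr(A)·V. -/

import Mathlib

open Matrix

theorem stmt_3 (a12 a21 : ℝ) (h12 : 0 ≤ a12) (h21 : 0 ≤ a21) :
    let A : Matrix (Fin 2) (Fin 2) ℝ := !![-a12, a12; a21, -a21]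
    let P : Matrix (Fin 2) (Fin 2) ℝ :=
      1 - (2 : ℝ)⁻¹ • Matrix.of (fun _ _ => (1 : ℝ))
    (P * A + Aᵀ * P = (2 * A.trace) • P) ∧
      ∀ (x : ℝ → Fin 2 → ℝ), (∀ s : ℝ, HasDerivAt x (A.mulVec (x s)) s) →
        ∀ t : ℝ,
          HasDerivAt (fun s => (x s) ⬝ᵥ P.mulVec (x s))
            (2 * A.trace * ((x t) ⬝ᵥ P.mulVec (x t))) t := by
  intro A P
  have hPval : ∀ v : Fin 2 → ℝ, v ⬝ᵥ P.mulVec v = (v 0 - v 1) ^ 2 / 2 := by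
    intro v
    simp [P, Matrix.mulVec, dotProduct, Fin.sum_univ_two, Matrix.one_apply,
      Matrix.sub_apply, Matrix.smul_apply]
    ring
  constructor
  · ext i j
    fin_cases i <;> fin_cases j <;>
      simp [A, P, Matrix.trace_fin_two, Matrix.mul_apply, Fin.sum_univ_two, Matrix.transpose_apply, Matrix.vecHead, Matrix.vecTail,
        Matrix.one_apply, Matrix.sub_apply, Matrix.smul_apply] <;> ring
  · intro x hx t
    have h0 : HasDerivAt (fun u => x u 0) (A.mulVec (x t) 0) t :=
      hasDerivAt_pi.mp (hx t) 0
    have h1 : HasDerivAt (fun u => x u 1) (A.mulVec (x t) 1) t :=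
      hasDerivAt_pi.mp (hx t) 1
    have key : (fun s => (x s) ⬝ᵥ P.mulVec (x s)) = fun s => (x s 0 - x s 1) ^ 2 / 2 :=
      funext fun s => hPval (x s)
    rw [key, hPval]
    have hm0 : A.mulVec (x t) 0 = -a12 * x t 0 + a12 * x t 1 := by
      simp [A, Matrix.mulVec, dotProduct, Fin.sum_univ_two]
    have hm1 : A.mulVec (x t) 1 = a21 * x t 0 + -a21 * x t 1 := by
      simp [A, Matrix.mulVec, dotProduct, Fin.sum_univ_two]
    have hd := (((h0.sub h1).pow 2).div_const 2)
    convert hd using 1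
    · rfl
    · rfl
    · rfl
    rw [hm0, hm1]
    simp [A, Matrix.trace_fin_two]
    ring
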